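/- Let a, b, c : ℝ → ℝ be three times differentiable functions satisfying the constraint 4b − b'' = a''c' − c''a' + 3a'c − 3ac' on ℝ, and set u = a − a''. Then for every x ∈ ℝ: u'b + (3/2) u b' − (3/2) u (a'c' − ac) = (a'b) − (a'b)'' + ½ f₁' + ½ g₁, where f₁ = a'b' + (a')² c' + 3ab − 3a'ac and g₁ = ba' + 3a²c + 3aa'c'. -/
import Mathlib


/-- pointwise identity underlying the hyperbolic reformulation of the first
equation: for three times differentiable `a, b, c` satisfying the constraint
`4b - b'' = a''c' - c''a' + 3a'c - 3ac'`, with `u = a - a''`,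
`f₁ = a'b' + (a')²c' + 3ab - 3a'ac` and `g₁ = ba' + 3a²c + 3aa'c'`, one has
`u'b + (3/2)ub' - (3/2)u(a'c' - ac) = (a'b) - (a'b)'' + ½ f₁' + ½ g₁`. -/
theorem hyperbolic_reformulation_first_eq (a b c : ℝ → ℝ)
    (ha : Differentiable ℝ a) (ha' : Differentiable ℝ (deriv a))
    (ha'' : Differentiable ℝ (deriv (deriv a)))
    (hb : Differentiable ℝ b) (hb' : Differentiable ℝ (deriv b))
    (hb'' : Differentiable ℝ (deriv (deriv b)))
    (hc : Differentiable ℝ c) (hc' : Differentiable ℝ (deriv c))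
    (hc'' : Differentiable ℝ (deriv (deriv c)))
    (hconstraint : ∀ x : ℝ,
      4 * b x - deriv (deriv b) x
        = deriv (deriv a) x * deriv c x - deriv (deriv c) x * deriv a x
            + 3 * deriv a x * c x - 3 * a x * deriv c x)
    (u f₁ g₁ : ℝ → ℝ)
    (hu : u = fun x => a x - deriv (deriv a) x)
    (hf₁ : f₁ = fun y => deriv a y * deriv b y + (deriv a y) ^ 2 * deriv c y
      + 3 * a y * b y - 3 * deriv a y * a y * c y)
    (hg₁ : g₁ = fun y => b y * deriv a y + 3 * (a y) ^ 2 * c y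
      + 3 * a y * deriv a y * deriv c y) :
    ∀ x : ℝ,
      deriv u x * b x + (3 / 2) * u x * deriv b x
          - (3 / 2) * u x * (deriv a x * deriv c x - a x * c x)
        = deriv a x * b x - deriv (deriv (fun y => deriv a y * b y)) x
            + (1 / 2) * deriv f₁ x + (1 / 2) * g₁ x := by
  subst hu hf₁ hg₁
  intro x
  have hAx : HasDerivAt a (deriv a x) x := (ha x).hasDerivAt
  have hA1x : HasDerivAt (deriv a) (deriv (deriv a) x) x := (ha' x).hasDerivAt
  have hA2x : HasDerivAt (deriv (deriv a)) (deriv (deriv (deriv a)) x) x := (ha'' x).hasDerivAt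
  have hBx : HasDerivAt b (deriv b x) x := (hb x).hasDerivAt
  have hB1x : HasDerivAt (deriv b) (deriv (deriv b) x) x := (hb' x).hasDerivAt
  have hCx : HasDerivAt c (deriv c x) x := (hc x).hasDerivAt
  have hC1x : HasDerivAt (deriv c) (deriv (deriv c) x) x := (hc' x).hasDerivAt
  -- derivative of u
  have hux : deriv (fun y => a y - deriv (deriv a) y) x
      = deriv a x - deriv (deriv (deriv a)) x := (hAx.sub hA2x).deriv
  -- first derivative of a' * b, as a function
  have hP : deriv (fun y => deriv a y * b y)
      = fun y => deriv (deriv a) y * b y + deriv a y * deriv b y := by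
    funext y
    exact ((ha' y).hasDerivAt.mul (hb y).hasDerivAt).deriv
  -- second derivative of a' * b at x
  have hQ : deriv (deriv (fun y => deriv a y * b y)) x
      = deriv (deriv (deriv a)) x * b x + deriv (deriv a) x * deriv b x
        + (deriv (deriv a) x * deriv b x + deriv a x * deriv (deriv b) x) := by
    rw [hP]
    exact ((hA2x.mul hBx).add (hA1x.mul hB1x)).deriv
  -- derivative of f₁ at x
  have hF : deriv (fun y => deriv a y * deriv b y + (deriv a y) ^ 2 * deriv c y
      + 3 * a y * b y - 3 * deriv a y * a y * c y) x
      = (deriv (deriv a) x * deriv b x + deriv a x * deriv (deriv b) x)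
        + ((2 * deriv a x ^ 1 * deriv (deriv a) x) * deriv c x
            + (deriv a x) ^ 2 * deriv (deriv c) x)
        + (3 * deriv a x * b x + 3 * a x * deriv b x)
        - ((3 * deriv (deriv a) x * a x + 3 * deriv a x * deriv a x) * c x
            + 3 * deriv a x * a x * deriv c x) := by
    exact (((hA1x.mul hB1x).add ((hA1x.pow 2).mul hC1x)).add
      ((hAx.const_mul 3).mul hBx)).sub
      (((hA1x.const_mul 3).mul hAx).mul hCx) |>.deriv
  rw [hux, hQ, hF]
  linear_combination (-(deriv a x) / 2) * hconstraint x
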